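/- arXiv:1803.01613 — 6 statements merged into one kernel-verified Lean document; each statement's English description precedes it below -/
import Mathlib

section
/- Every tuple (c₂, a₂₁, γ, b₁, b₂) ∈ ℝ⁵ satisfying the consistency and order-3 conditions of a 3-stage stiffly accurate ESDIRK method, namely c₂ = a₂₁ + γ, b₁ + b₂ + γ = 1, b₂c₂ + γ = 1/2, b₂c₂² + γ = 1/3, and 2b₂c₂γ + γ² = 1/6, has γ = (3+√3)/6 or γ = (3−√3)/6, and in both cases a₂₁b₂ − b₁γ ≠ 0. Consequently, no 3-stage stiffly accurate ESDIRK method of order 3 satisfies the L-stability condition a₂₁b₂ − b₁γ = 0. -/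
/-- Any 3-stage stiffly accurate ESDIRK method of order 3 has
γ = (3 ± √3)/6, and in both cases the L-stability condition
a₂₁b₂ − b₁γ = 0 fails. Hence no 3-stage stiffly accurate ESDIRK method
of order 3 is L-stable. -/
theorem esdirk_three_stage_order3_not_Lstable
    (c₂ a₂₁ γ b₁ b₂ : ℝ)
    (hcons : c₂ = a₂₁ + γ)
    (h1 : b₁ + b₂ + γ = 1)
    (h2 : b₂ * c₂ + γ = 1 / 2)
    (h3a : b₂ * c₂ ^ 2 + γ = 1 / 3)
    (h3b : 2 * b₂ * c₂ * γ + γ ^ 2 = 1 / 6) :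
    (γ = (3 + Real.sqrt 3) / 6 ∨ γ = (3 - Real.sqrt 3) / 6) ∧
      a₂₁ * b₂ - b₁ * γ ≠ 0 := by
  have hγ : γ ^ 2 - γ + 1 / 6 = 0 := by nlinarith [h2, h3b]
  have hs : Real.sqrt 3 ^ 2 = 3 := Real.sq_sqrt (by norm_num)
  constructor
  · have : (γ - (3 + Real.sqrt 3) / 6) * (γ - (3 - Real.sqrt 3) / 6) = 0 := by
      nlinarith [hγ, hs]
    rcases mul_eq_zero.mp this with h | h
    · exact Or.inl (by linarith)
    · exact Or.inr (by linarith)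
  · have hexpr : a₂₁ * b₂ - b₁ * γ = 1 / 3 - γ := by linear_combination (-b₂) * hcons + (-γ) * h1 + h2 + hγ
    rw [hexpr]
    intro h
    have : γ = 1 / 3 := by linarith
    rw [this] at hγ
    norm_num at hγ
end

section
/- The system in the unknowns (c₂, a₂₁, γ, b₁, b₂) ∈ ℝ⁵ consisting of the L-stability condition a₂₁b₂ = b₁γ, the order-1 condition b₁ + b₂ + γ = 1, the order-2 condition b₂c₂ + γ = 1/2, the consistency condition a₂₁ + γ = c₂, the stage-order-2 condition c₂ = 2γ, and c₂ ≠ 0, has exactly two solutions, characterized by γ = (2+√2)/2 and γ = (2−√2)/2 respectively. The unique solution additionally satisfying 0 < c₂ < 1 is γ = a₂₁ = (2−√2)/2, c₂ = 2−√2, b₁ = b₂ = √2/4 (the ESDIRK23 method). -/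
/-- The system defining a 2nd-order, L-stable, stiffly accurate 3-stage ESDIRK
method with stage order 2 has exactly two solutions, characterized by
γ = (2 ± √2)/2; the unique solution with 0 < c₂ < 1 is the ESDIRK23 method:
γ = a₂₁ = (2−√2)/2, c₂ = 2−√2, b₁ = b₂ = √2/4. -/
theorem esdirk23_characterization :
    (∀ c₂ a₂₁ γ b₁ b₂ : ℝ,
        (a₂₁ * b₂ = b₁ * γ ∧ b₁ + b₂ + γ = 1 ∧ b₂ * c₂ + γ = 1 / 2 ∧
          a₂₁ + γ = c₂ ∧ c₂ = 2 * γ ∧ c₂ ≠ 0) ↔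
        ((γ = (2 + Real.sqrt 2) / 2 ∨ γ = (2 - Real.sqrt 2) / 2) ∧
          c₂ = 2 * γ ∧ a₂₁ = γ ∧ b₁ = (1 - γ) / 2 ∧ b₂ = (1 - γ) / 2)) ∧
    (∀ c₂ a₂₁ γ b₁ b₂ : ℝ,
        (a₂₁ * b₂ = b₁ * γ ∧ b₁ + b₂ + γ = 1 ∧ b₂ * c₂ + γ = 1 / 2 ∧
          a₂₁ + γ = c₂ ∧ c₂ = 2 * γ ∧ c₂ ≠ 0 ∧ 0 < c₂ ∧ c₂ < 1) ↔
        (γ = (2 - Real.sqrt 2) / 2 ∧ a₂₁ = (2 - Real.sqrt 2) / 2 ∧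
          c₂ = 2 - Real.sqrt 2 ∧ b₁ = Real.sqrt 2 / 4 ∧ b₂ = Real.sqrt 2 / 4)) := by
  have hs : Real.sqrt 2 ^ 2 = 2 := Real.sq_sqrt (by norm_num)
  have hs0 : 0 ≤ Real.sqrt 2 := Real.sqrt_nonneg 2
  have hs1 : 1 < Real.sqrt 2 := by nlinarith
  have hs2 : Real.sqrt 2 < 2 := by nlinarith
  have main : ∀ c₂ a₂₁ γ b₁ b₂ : ℝ,
      (a₂₁ * b₂ = b₁ * γ ∧ b₁ + b₂ + γ = 1 ∧ b₂ * c₂ + γ = 1 / 2 ∧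
          a₂₁ + γ = c₂ ∧ c₂ = 2 * γ ∧ c₂ ≠ 0) ↔
        ((γ = (2 + Real.sqrt 2) / 2 ∨ γ = (2 - Real.sqrt 2) / 2) ∧
          c₂ = 2 * γ ∧ a₂₁ = γ ∧ b₁ = (1 - γ) / 2 ∧ b₂ = (1 - γ) / 2) := by
    intro c₂ a₂₁ γ b₁ b₂
    constructor
    · rintro ⟨h1, h2, h3, h4, h5, h6⟩
      have hγ : γ ≠ 0 := by
        intro h
        exact h6 (by rw [h5, h]; ring)
      have ha : a₂₁ = γ := by linarith
      have hb : b₂ = b₁ := by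
        have h1' : γ * b₂ = γ * b₁ := by rw [ha] at h1; linarith [h1]
        exact mul_left_cancel₀ hγ h1'
      have hb1 : b₁ = (1 - γ) / 2 := by linarith
      have hb2 : b₂ = (1 - γ) / 2 := by linarith
      have hq : 2 * γ ^ 2 - 4 * γ + 1 = 0 := by
        rw [hb2, h5] at h3; nlinarith [h3]
      have hfac : (2 * γ - (2 + Real.sqrt 2)) * (2 * γ - (2 - Real.sqrt 2)) = 0 := by
        nlinarith [hq, hs]
      rcases mul_eq_zero.1 hfac with h | h
      · exact ⟨Or.inl (by linarith), h5, ha, hb1, hb2⟩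
      · exact ⟨Or.inr (by linarith), h5, ha, hb1, hb2⟩
    · rintro ⟨hγor, h5, ha, hb1, hb2⟩
      have hγpos : 0 < γ := by rcases hγor with h | h <;> rw [h] <;> nlinarith
      have hq : 2 * γ ^ 2 - 4 * γ + 1 = 0 := by
        rcases hγor with h | h <;> rw [h] <;> nlinarith
      refine ⟨by rw [ha, hb1, hb2]; ring, by rw [hb1, hb2]; ring, ?_, by linarith, h5, ?_⟩
      · rw [hb2, h5]; nlinarith
      · rw [h5]; intro h; nlinarith
  refine ⟨main, fun c₂ a₂₁ γ b₁ b₂ => ?_⟩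
  constructor
  · rintro ⟨h1, h2, h3, h4, h5, h6, h7, h8⟩
    obtain ⟨hγor, hc, ha, hb1, hb2⟩ := (main c₂ a₂₁ γ b₁ b₂).1 ⟨h1, h2, h3, h4, h5, h6⟩
    have hγ : γ = (2 - Real.sqrt 2) / 2 := by
      rcases hγor with h | h
      · exfalso; rw [hc, h] at h8; nlinarith
      · exact h
    refine ⟨hγ, by rw [ha, hγ], by rw [hc, hγ]; ring, ?_, ?_⟩
    · rw [hb1, hγ]; ring
    · rw [hb2, hγ]; ring
  · rintro ⟨hγ, ha, hc, hb1, hb2⟩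
    obtain ⟨h1, h2, h3, h4, h5, h6⟩ := (main c₂ a₂₁ γ b₁ b₂).2
      ⟨Or.inr hγ, by rw [hc, hγ]; ring, by rw [ha, hγ], by rw [hb1, hγ]; ring,
        by rw [hb2, hγ]; ring⟩
    exact ⟨h1, h2, h3, h4, h5, h6, by rw [hc]; nlinarith, by rw [hc]; nlinarith⟩
end

section
/- Let γ, c₂, b₂, b̂₂, b̂₃ ∈ ℝ satisfy c₂ = 2γ and b₂c₂ + γ = 1/2. If b̂₂c₂² + b̂₃ = 1/3, then b̂₂(c₂γ) + b̂₃(c₂b₂ + γ) = 1/6. In other words, for a 3-stage stiffly accurate ESDIRK method with stage order 2 in the second stage and an order-2 advancing method, the fourth embedded order-3 condition is linearly dependent on the third. -/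
/-- For a 3-stage stiffly accurate ESDIRK method with stage order 2 in the second
stage (c₂ = 2γ) and a 2nd-order advancing method (b₂c₂ + γ = 1/2), the fourth
embedded order-3 condition follows from the third one: if b̂₂c₂² + b̂₃ = 1/3, then
b̂₂(c₂γ) + b̂₃(c₂b₂ + γ) = 1/6. -/
theorem esdirk23_embedded_condition_dependent
    (γ c₂ b₂ bh₂ bh₃ : ℝ)
    (hc₂ : c₂ = 2 * γ)
    (horder2 : b₂ * c₂ + γ = 1 / 2)
    (h3 : bh₂ * c₂ ^ 2 + bh₃ = 1 / 3) :
    bh₂ * (c₂ * γ) + bh₃ * (c₂ * b₂ + γ) = 1 / 6 := by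
  subst hc₂; linear_combination (1/2) * h3 + bh₃ * horder2
end

section
/- Let γ = (2−√2)/2, c = (0, 2γ, 1), and b = ((1−γ)/2, (1−γ)/2, γ). There is a unique matrix B̄ = [b̄₁ b̄₂] ∈ ℝ^{3×2} such that the polynomial b̄(θ) = b̄₁θ + b̄₂θ² satisfies for all θ ∈ ℝ: b̄(θ)ᵀe = θ and b̄(θ)ᵀc = θ²/2 (the order-2 continuous-extension conditions), together with the side conditions b̄(1) = b and b̄(2γ) = (γ, γ, 0)ᵀ (interpolation of the second internal stage). This unique solution is b̄₁ = (√2/2, √2/2, 1−√2)ᵀ and b̄₂ = (−√2/4, −√2/4, √2/2)ᵀ. -/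
open Matrix

/-- The unique 2nd-order continuous extension of ESDIRK23 satisfying b̄(1) = b and
b̄(2γ) = (γ, γ, 0) (interpolation of the second internal stage) has coefficients
b̄₁ = (√2/2, √2/2, 1−√2) and b̄₂ = (−√2/4, −√2/4, √2/2). -/
theorem esdirk23_order2_continuous_extension
    (γ : ℝ) (hγ : γ = (2 - Real.sqrt 2) / 2)
    (c : Fin 3 → ℝ) (hc : c = ![0, 2 * γ, 1])
    (b : Fin 3 → ℝ) (hb : b = ![(1 - γ) / 2, (1 - γ) / 2, γ])
    (e : Fin 3 → ℝ) (he : e = ![1, 1, 1]) :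
    ∀ b₁ b₂ : Fin 3 → ℝ,
      ((∀ θ : ℝ, (θ • b₁ + θ ^ 2 • b₂) ⬝ᵥ e = θ ∧
          (θ • b₁ + θ ^ 2 • b₂) ⬝ᵥ c = θ ^ 2 / 2) ∧
        b₁ + b₂ = b ∧
        (2 * γ) • b₁ + (2 * γ) ^ 2 • b₂ = ![γ, γ, 0]) ↔
      (b₁ = ![Real.sqrt 2 / 2, Real.sqrt 2 / 2, 1 - Real.sqrt 2] ∧
        b₂ = ![-(Real.sqrt 2 / 4), -(Real.sqrt 2 / 4), Real.sqrt 2 / 2]) := by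
  have hs2 : Real.sqrt 2 ^ 2 = 2 := Real.sq_sqrt (by norm_num)
  have hslt : Real.sqrt 2 < 2 := by nlinarith [Real.sqrt_nonneg 2]
  have hsgt : 1 < Real.sqrt 2 := by nlinarith [Real.sqrt_nonneg 2]
  have hne2 : (2 : ℝ) - Real.sqrt 2 ≠ 0 := by linarith
  have hne1 : Real.sqrt 2 - 1 ≠ 0 := by linarith
  subst hγ hc hb he
  intro b₁ b₂
  constructor
  · rintro ⟨hpoly, hsum, h2g⟩
    obtain ⟨h1e, h1c⟩ := hpoly 1
    obtain ⟨h2e, h2c⟩ := hpoly 2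
    simp only [dotProduct, Fin.sum_univ_three, Pi.add_apply, Pi.smul_apply,
      smul_eq_mul, Matrix.cons_val_zero, Matrix.cons_val_one, Matrix.head_cons,
      Matrix.cons_val_two, Matrix.tail_cons] at h1e h1c h2e h2c
    have B0 := congrFun hsum 0
    have B1 := congrFun hsum 1
    have B2 := congrFun hsum 2
    have C2 := congrFun h2g 2
    simp only [Pi.add_apply, Pi.smul_apply, smul_eq_mul, Matrix.cons_val_zero,
      Matrix.cons_val_one, Matrix.head_cons, Matrix.cons_val_two, Matrix.tail_cons] at B0 B1 B2 C2
    have hy2 : b₂ 2 = Real.sqrt 2 / 2 := by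
      have hL2 : (Real.sqrt 2 - 1) * b₂ 2 = (2 - Real.sqrt 2) / 2 :=
        mul_left_cancel₀ hne2 (by linear_combination (2 - Real.sqrt 2) * B2 - C2)
      exact mul_left_cancel₀ hne1 (by linear_combination hL2 - (1/2) * hs2)
    have hx2 : b₁ 2 = 1 - Real.sqrt 2 := by linear_combination B2 - hy2
    have hx1 : b₁ 1 = Real.sqrt 2 / 2 :=
      mul_left_cancel₀ hne2 (by linear_combination 2 * h1c - (1/2) * h2c - hx2 + (1/2) * hs2)
    have hy1 : b₂ 1 = -(Real.sqrt 2 / 4) :=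
      mul_left_cancel₀ hne2 (by linear_combination (1/2) * h2c - h1c - hy2 - (1/4) * hs2)
    have hx0 : b₁ 0 = Real.sqrt 2 / 2 := by linear_combination 2 * h1e - (1/2) * h2e - hx1 - hx2
    have hy0 : b₂ 0 = -(Real.sqrt 2 / 4) := by linear_combination (1/2) * h2e - h1e - hy1 - hy2
    constructor <;> funext i <;> fin_cases i <;>
      simp only [Matrix.cons_val_zero, Matrix.cons_val_one, Matrix.head_cons,
        Matrix.cons_val_two, Matrix.tail_cons]
    · exact hx0
    · exact hx1
    · exact hx2
    · exact hy0
    · exact hy1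
    · exact hy2
  · rintro ⟨rfl, rfl⟩
    refine ⟨fun θ => ⟨?_, ?_⟩, ?_, ?_⟩
    · simp only [dotProduct, Fin.sum_univ_three, Pi.add_apply, Pi.smul_apply,
        smul_eq_mul, Matrix.cons_val_zero, Matrix.cons_val_one, Matrix.head_cons,
        Matrix.cons_val_two, Matrix.tail_cons]
      ring
    · simp only [dotProduct, Fin.sum_univ_three, Pi.add_apply, Pi.smul_apply,
        smul_eq_mul, Matrix.cons_val_zero, Matrix.cons_val_one, Matrix.head_cons,
        Matrix.cons_val_two, Matrix.tail_cons]
      linear_combination (θ^2 / 4 - θ / 2) * hs2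
    · funext i
      fin_cases i <;> simp <;> ring
    · funext i
      fin_cases i <;> simp
      all_goals first
        | linear_combination (1/2 - Real.sqrt 2/4) * hs2
        | linear_combination (Real.sqrt 2/2 - 1) * hs2
end

section
/- Let γ = (2−√2)/2, c = (0, 2γ, 1), A = [[0,0,0],[γ,γ,0],[(1−γ)/2,(1−γ)/2,γ]], b = ((1−γ)/2, (1−γ)/2, γ), and b̂ = ((6γ−1)/(12γ), 1/(12γ(1−2γ)), (1−3γ)/(3(1−2γ))) (the ESDIRK23 method and its embedded weights). There is a unique B̄ = [b̄₁ b̄₂ b̄₃] ∈ ℝ^{3×3} such that b̄(θ) = b̄₁θ + b̄₂θ² + b̄₃θ³ satisfies for all θ ∈ ℝ the order-3 conditions b̄(θ)ᵀe = θ, b̄(θ)ᵀCe = θ²/2, b̄(θ)ᵀC²e = θ³/3, and b̄(θ)ᵀACe = θ³/6, where C = diag(c) and e = (1,1,1)ᵀ. This unique order-3 continuous extension satisfies b̄(1) = b̂; consequently there exists no order-3 continuous extension with b̄(1) = b. -/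
open Matrix

lemma esdirk_aux (γ : ℝ) (hq : 2*γ^2 - 4*γ + 1 = 0)
    (b₁ b₂ b₃ : Fin 3 → ℝ)
    (h : ∀ θ : ℝ,
      (θ • b₁ + θ ^ 2 • b₂ + θ ^ 3 • b₃) ⬝ᵥ ![(1:ℝ),1,1] = θ ∧
      (θ • b₁ + θ ^ 2 • b₂ + θ ^ 3 • b₃) ⬝ᵥ ![(0:ℝ), 2*γ, 1] = θ ^ 2 / 2 ∧
      (θ • b₁ + θ ^ 2 • b₂ + θ ^ 3 • b₃) ⬝ᵥ (fun i => (![(0:ℝ), 2*γ, 1]) i ^ 2) = θ ^ 3 / 3 ∧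
      (θ • b₁ + θ ^ 2 • b₂ + θ ^ 3 • b₃) ⬝ᵥ ![(0:ℝ), 2*γ^2, 2*γ - γ^2] = θ ^ 3 / 6) :
    b₁ = ![1,0,0] ∧ b₂ = ![(γ-3)/2, (5-3*γ)/2, γ-1] ∧
      b₃ = ![(2-γ)/3, (3*γ-5)/3, (3-2*γ)/3] := by
  obtain ⟨h1e, h1c, h1s, -⟩ := h 1
  obtain ⟨h2e, h2c, h2s, -⟩ := h 2
  obtain ⟨h3e, h3c, h3s, -⟩ := h (-1)
  simp only [dotProduct, Fin.sum_univ_three, Pi.add_apply, Pi.smul_apply,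
    smul_eq_mul, Matrix.cons_val_zero, Matrix.cons_val_one, Matrix.head_cons,
    Matrix.cons_val_two, Matrix.tail_cons] at h1e h1c h1s h2e h2c h2s h3e h3c h3s
  have E2 : 2*γ*(b₁ 1) + b₁ 2 = 0 := by
    linear_combination h1c - h2c/6 - h3c/3
  have E3 : 4*γ^2*(b₁ 1) + b₁ 2 = 0 := by
    linear_combination h1s - h2s/6 - h3s/3
  have F2 : 2*γ*(b₂ 1) + b₂ 2 = 1/2 := by
    linear_combination h1c/2 + h3c/2
  have F3 : 4*γ^2*(b₂ 1) + b₂ 2 = 0 := by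
    linear_combination h1s/2 + h3s/2
  have G2 : 2*γ*(b₃ 1) + b₃ 2 = 0 := by
    linear_combination h2c/6 - h1c/2 - h3c/6
  have G3 : 4*γ^2*(b₃ 1) + b₃ 2 = 1/3 := by
    linear_combination h2s/6 - h1s/2 - h3s/6
  have hx1 : b₁ 1 = 0 := by
    linear_combination (3*γ-5)*(E3 - E2) + (1-6*γ)*(b₁ 1)*hq
  have hx2 : b₁ 2 = 0 := by linear_combination E2 - 2*γ*hx1
  have hx0 : b₁ 0 = 1 := by
    linear_combination h1e - h2e/6 - h3e/3 - hx1 - hx2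
  have hy1 : b₂ 1 = (5-3*γ)/2 := by
    linear_combination (3*γ-5)*(F3 - F2) + (1-6*γ)*(b₂ 1)*hq
  have hy2 : b₂ 2 = γ - 1 := by linear_combination F2 - 2*γ*hy1 + 3/2*hq
  have hy0 : b₂ 0 = (γ-3)/2 := by
    linear_combination h1e/2 + h3e/2 - hy1 - hy2
  have hz1 : b₃ 1 = (3*γ-5)/3 := by
    linear_combination (3*γ-5)*(G3 - G2) + (1-6*γ)*(b₃ 1)*hq
  have hz2 : b₃ 2 = (3-2*γ)/3 := by linear_combination G2 - 2*γ*hz1 - hq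
  have hz0 : b₃ 0 = (2-γ)/3 := by
    linear_combination h2e/6 - h1e/2 - h3e/6 - hz1 - hz2
  refine ⟨?_, ?_, ?_⟩ <;> funext i <;> fin_cases i <;>
    simp [hx0, hx1, hx2, hy0, hy1, hy2, hz0, hz1, hz2]

/-- There is a unique order-3 continuous extension of the ESDIRK23 method;
it satisfies b̄(1) = b̂ (the embedded weights), and consequently there is no
order-3 continuous extension with b̄(1) = b (the advancing weights). -/
theorem esdirk23_order3_continuous_extension
    (γ : ℝ) (hγ : γ = (2 - Real.sqrt 2) / 2)
    (c : Fin 3 → ℝ) (hc : c = ![0, 2 * γ, 1])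
    (A : Matrix (Fin 3) (Fin 3) ℝ)
    (hA : A = !![0, 0, 0; γ, γ, 0; (1 - γ) / 2, (1 - γ) / 2, γ])
    (b : Fin 3 → ℝ) (hb : b = ![(1 - γ) / 2, (1 - γ) / 2, γ])
    (bhat : Fin 3 → ℝ)
    (hbhat : bhat = ![(6 * γ - 1) / (12 * γ), 1 / (12 * γ * (1 - 2 * γ)),
      (1 - 3 * γ) / (3 * (1 - 2 * γ))])
    (e : Fin 3 → ℝ) (he : e = ![1, 1, 1]) :
    (∃! B : (Fin 3 → ℝ) × (Fin 3 → ℝ) × (Fin 3 → ℝ),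
        ∀ θ : ℝ,
          (θ • B.1 + θ ^ 2 • B.2.1 + θ ^ 3 • B.2.2) ⬝ᵥ e = θ ∧
          (θ • B.1 + θ ^ 2 • B.2.1 + θ ^ 3 • B.2.2) ⬝ᵥ c = θ ^ 2 / 2 ∧
          (θ • B.1 + θ ^ 2 • B.2.1 + θ ^ 3 • B.2.2) ⬝ᵥ (fun i => c i ^ 2) = θ ^ 3 / 3 ∧
          (θ • B.1 + θ ^ 2 • B.2.1 + θ ^ 3 • B.2.2) ⬝ᵥ (A *ᵥ c) = θ ^ 3 / 6) ∧
    (∀ b₁ b₂ b₃ : Fin 3 → ℝ,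
        (∀ θ : ℝ,
          (θ • b₁ + θ ^ 2 • b₂ + θ ^ 3 • b₃) ⬝ᵥ e = θ ∧
          (θ • b₁ + θ ^ 2 • b₂ + θ ^ 3 • b₃) ⬝ᵥ c = θ ^ 2 / 2 ∧
          (θ • b₁ + θ ^ 2 • b₂ + θ ^ 3 • b₃) ⬝ᵥ (fun i => c i ^ 2) = θ ^ 3 / 3 ∧
          (θ • b₁ + θ ^ 2 • b₂ + θ ^ 3 • b₃) ⬝ᵥ (A *ᵥ c) = θ ^ 3 / 6) →
        b₁ + b₂ + b₃ = bhat) ∧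
    ¬∃ b₁ b₂ b₃ : Fin 3 → ℝ,
        (∀ θ : ℝ,
          (θ • b₁ + θ ^ 2 • b₂ + θ ^ 3 • b₃) ⬝ᵥ e = θ ∧
          (θ • b₁ + θ ^ 2 • b₂ + θ ^ 3 • b₃) ⬝ᵥ c = θ ^ 2 / 2 ∧
          (θ • b₁ + θ ^ 2 • b₂ + θ ^ 3 • b₃) ⬝ᵥ (fun i => c i ^ 2) = θ ^ 3 / 3 ∧
          (θ • b₁ + θ ^ 2 • b₂ + θ ^ 3 • b₃) ⬝ᵥ (A *ᵥ c) = θ ^ 3 / 6) ∧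
        b₁ + b₂ + b₃ = b := by
  subst hc hA hb hbhat he
  have hs2 : Real.sqrt 2 ^ 2 = 2 := Real.sq_sqrt (by norm_num)
  have hs0 : (0:ℝ) ≤ Real.sqrt 2 := Real.sqrt_nonneg 2
  have hq : 2*γ^2 - 4*γ + 1 = 0 := by rw [hγ]; linear_combination hs2/2
  have hslt : Real.sqrt 2 < 2 := by nlinarith
  have hsgt : 1 < Real.sqrt 2 := by nlinarith
  have hγpos : 0 < γ := by rw [hγ]; linarith
  have hγ0 : γ ≠ 0 := ne_of_gt hγpos
  have h2γpos : 0 < 1 - 2*γ := by rw [hγ]; linarith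
  have h2γ : 1 - 2*γ ≠ 0 := ne_of_gt h2γpos
  have hAc : (!![(0:ℝ), 0, 0; γ, γ, 0; (1 - γ) / 2, (1 - γ) / 2, γ] *ᵥ ![0, 2 * γ, 1])
      = ![(0:ℝ), 2*γ^2, 2*γ - γ^2] := by
    funext i
    fin_cases i <;>
      simp [Matrix.mulVec, dotProduct, Fin.sum_univ_three] <;> ring
  rw [hAc]
  refine ⟨⟨(![1,0,0], ![(γ-3)/2,(5-3*γ)/2,γ-1], ![(2-γ)/3,(3*γ-5)/3,(3-2*γ)/3]),
    ?_, ?_⟩, ?_, ?_⟩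
  · intro θ
    refine ⟨?_, ?_, ?_, ?_⟩ <;>
      simp only [dotProduct, Fin.sum_univ_three, Pi.add_apply, Pi.smul_apply,
        smul_eq_mul, Matrix.cons_val_zero, Matrix.cons_val_one, Matrix.head_cons,
        Matrix.cons_val_two, Matrix.tail_cons]
    · ring
    · linear_combination (θ^3 - 3/2*θ^2) * hq
    · linear_combination ((-3*γ-1)*θ^2 + (6*γ+2)/3*θ^3) * hq
    · linear_combination (-2*γ*θ^2 + (8*γ-1)/6*θ^3) * hq
  · rintro ⟨y1, y2, y3⟩ hy
    obtain ⟨u1, u2, u3⟩ := esdirk_aux γ hq y1 y2 y3 hy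
    simp only [Prod.mk.injEq]
    exact ⟨u1, u2, u3⟩
  · intro b₁ b₂ b₃ hb
    obtain ⟨u1, u2, u3⟩ := esdirk_aux γ hq b₁ b₂ b₃ hb
    subst u1 u2 u3
    have d1 : (12:ℝ)*γ ≠ 0 := mul_ne_zero (by norm_num) hγ0
    have d2 : (12:ℝ)*γ*(1-2*γ) ≠ 0 := mul_ne_zero d1 h2γ
    have d3 : (3:ℝ)*(1-2*γ) ≠ 0 := mul_ne_zero (by norm_num) h2γ
    have hbh : (![(6*γ-1)/(12*γ), 1/(12*γ*(1-2*γ)), (1-3*γ)/(3*(1-2*γ))] : Fin 3 → ℝ)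
        = ![(γ+1)/6, (5-3*γ)/6, γ/3] := by
      funext i
      fin_cases i
      · show (6*γ-1)/(12*γ) = (γ+1)/6
        rw [div_eq_div_iff d1 (by norm_num)]
        linear_combination -6*hq
      · show 1/(12*γ*(1-2*γ)) = (5-3*γ)/6
        rw [div_eq_div_iff d2 (by norm_num)]
        linear_combination (6-36*γ)*hq
      · show (1-3*γ)/(3*(1-2*γ)) = γ/3
        rw [div_eq_div_iff d3 (by norm_num)]
        linear_combination 3*hq
    rw [show (6*γ-1)/(12*γ) = (γ+1)/6 from congrFun hbh 0,
        show 1/(12*γ*(1-2*γ)) = (5-3*γ)/6 from congrFun hbh 1,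
        show (1-3*γ)/(3*(1-2*γ)) = γ/3 from congrFun hbh 2]
    funext i
    fin_cases i <;> simp <;> ring
  · rintro ⟨b₁, b₂, b₃, hb, hsum⟩
    obtain ⟨u1, u2, u3⟩ := esdirk_aux γ hq b₁ b₂ b₃ hb
    subst u1 u2 u3
    have h2 := congrFun hsum 2
    simp at h2
    linarith
end

section
/- Let γ ∈ ℝ with γ ≠ 0 and γ ≠ 1/2. Define c = (0, 2γ, 1, 1), b̂₁ = (−4γ² + 6γ − 1)/(4γ), b̂₂ = (−2γ + 1)/(4γ), b₁ = (6γ − 1)/(12γ), b₂ = −1/(12γ(2γ − 1)), b₃ = (−6γ² + 6γ − 1)/(3(2γ − 1)), and let A ∈ ℝ^{4×4} have rows (0,0,0,0), (γ,γ,0,0), (b̂₁,b̂₂,γ,0), (b₁,b₂,b₃,γ) (Kværnø's 4-stage ESDIRK family). Then the advancing weights b = (b₁,b₂,b₃,γ) satisfy the order-3 conditions bᵀe = 1, bᵀCe = 1/2, bᵀC²e = 1/3, and bᵀACe = 1/6, and the embedded weights b̂ = (b̂₁,b̂₂,γ,0) satisfy the order-2 conditions b̂ᵀe = 1 and b̂ᵀCe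 = 1/2, where C = diag(c) and e = (1,1,1,1)ᵀ. -/
open Matrix

/-- Kværnø's 4-stage ESDIRK 3/2 family: for every γ ≠ 0, γ ≠ 1/2, the advancing
weights b = (b₁,b₂,b₃,γ) satisfy the order-3 conditions and the embedded weights
b̂ = (b̂₁,b̂₂,γ,0) satisfy the order-2 conditions. -/
theorem kvaerno32_order_conditions
    (γ : ℝ) (hγ0 : γ ≠ 0) (hγhalf : γ ≠ 1 / 2)
    (c : Fin 4 → ℝ) (hc : c = ![0, 2 * γ, 1, 1])
    (bh₁ bh₂ b₁ b₂ b₃ : ℝ)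
    (hbh₁ : bh₁ = (-(4 * γ ^ 2) + 6 * γ - 1) / (4 * γ))
    (hbh₂ : bh₂ = (-(2 * γ) + 1) / (4 * γ))
    (hb₁ : b₁ = (6 * γ - 1) / (12 * γ))
    (hb₂ : b₂ = -1 / (12 * γ * (2 * γ - 1)))
    (hb₃ : b₃ = (-(6 * γ ^ 2) + 6 * γ - 1) / (3 * (2 * γ - 1)))
    (A : Matrix (Fin 4) (Fin 4) ℝ)
    (hA : A = !![0, 0, 0, 0; γ, γ, 0, 0; bh₁, bh₂, γ, 0; b₁, b₂, b₃, γ])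
    (b : Fin 4 → ℝ) (hb : b = ![b₁, b₂, b₃, γ])
    (bhat : Fin 4 → ℝ) (hbhat : bhat = ![bh₁, bh₂, γ, 0])
    (e : Fin 4 → ℝ) (he : e = ![1, 1, 1, 1]) :
    (b ⬝ᵥ e = 1 ∧ b ⬝ᵥ c = 1 / 2 ∧ b ⬝ᵥ (fun i => c i ^ 2) = 1 / 3 ∧
      b ⬝ᵥ (A *ᵥ c) = 1 / 6) ∧
    (bhat ⬝ᵥ e = 1 ∧ bhat ⬝ᵥ c = 1 / 2) := by
  have h2γ : 2 * γ - 1 ≠ 0 := by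
    intro h; apply hγhalf; linarith
  subst hc hbh₁ hbh₂ hb₁ hb₂ hb₃ hA hb hbhat he
  refine ⟨⟨?_, ?_, ?_, ?_⟩, ?_, ?_⟩ <;>
  · simp [dotProduct, mulVec, Fin.sum_univ_four]
    field_simp [show γ * 2 - 1 ≠ 0 by rwa [mul_comm]]
    ring
end
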